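/- Fix n ≥ 1, τ_x > 0, τ_y > 0, and set γ = τ_x/(τ_x+τ_y). Let G be an n×n real matrix with nonnegative entries, zero diagonal, and row sums d_i^out = Σ_{j≠i} G i j < 1, let c = (I − γ·G)⁻¹ 𝟙, set b_i = (1−γ)·c_i, and let d_i^in = Σ_{j≠i} G j i denote in-degrees. Let ε_1, …, ε_n, ε_0 be jointly independent square-integrable real random variables with mean zero, Var(ε_i) = 1/τ_x for 1 ≤ i ≤ n and Var(ε_0) = 1/τ_y, and define X_i = (1−b_i)·ε_i + b_i·ε_0. Define ΔW = Σ_{i=1}^{n} ( E[−(1−d_i^out)·X_i² − Σ_{j≠i} G i j·(X_i − X_j)²] + τ_x⁻¹(1 + d_i^out) ). Then ΔW < 0 if and only if Σ_{i=1}^{n} c_i·( (1 − d_i^in)·c_i + 2·d_i^in ) < 0. -/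

import Mathlib

open Matrix Finset MeasureTheory ProbabilityTheory

/-- Public information provision lowers aggregate welfare (`ΔW < 0`)
if and only if `Σ_i c_i ((1 - d_i^in) c_i + 2 d_i^in) < 0`. -/
theorem stmt6 (n : ℕ) (hn : 1 ≤ n) (τx τy : ℝ) (hτx : 0 < τx) (hτy : 0 < τy)
    (γ : ℝ) (hγ : γ = τx / (τx + τy))
    (G : Matrix (Fin n) (Fin n) ℝ)
    (hposG : ∀ i j, 0 ≤ G i j) (hdiag : ∀ i, G i i = 0)
    (hrow : ∀ i, ∑ j ∈ Finset.univ.erase i, G i j < 1)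
    (c : Fin n → ℝ) (hc : c = (1 - γ • G)⁻¹ *ᵥ fun _ => 1)
    (b : Fin n → ℝ) (hb : ∀ i, b i = (1 - γ) * c i)
    (din : Fin n → ℝ) (hdin : ∀ i, din i = ∑ j ∈ Finset.univ.erase i, G j i)
    {Ω : Type*} [MeasurableSpace Ω] (μ : Measure Ω) [IsProbabilityMeasure μ]
    (ε : Option (Fin n) → Ω → ℝ)
    (hindep : iIndepFun ε μ)
    (hL2 : ∀ k, MemLp (ε k) 2 μ)
    (hmean : ∀ k, ∫ ω, ε k ω ∂μ = 0)
    (hvarx : ∀ i : Fin n, variance (ε (some i)) μ = 1 / τx)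
    (hvary : variance (ε none) μ = 1 / τy)
    (X : Fin n → Ω → ℝ)
    (hX : ∀ i ω, X i ω = (1 - b i) * ε (some i) ω + b i * ε none ω)
    (ΔW : ℝ)
    (hΔW : ΔW = ∑ i, ((∫ ω, (-(1 - ∑ j ∈ Finset.univ.erase i, G i j) * (X i ω) ^ 2
          - ∑ j ∈ Finset.univ.erase i, G i j * (X i ω - X j ω) ^ 2) ∂μ)
        + τx⁻¹ * (1 + ∑ j ∈ Finset.univ.erase i, G i j))) :
    ΔW < 0 ↔ ∑ i, c i * ((1 - din i) * c i + 2 * din i) < 0 := by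
  -- basic facts
  have hτ : 0 < τx + τy := by linarith
  have hγ0 : 0 < γ := by rw [hγ]; positivity
  have hγ1 : γ < 1 := by rw [hγ, div_lt_one hτ]; linarith
  -- matrix part: the Katz-Bonacich equation
  have hdet : (1 - γ • G).det ≠ 0 := by
    apply det_ne_zero_of_sum_row_lt_diag
    intro k
    have h1 : ∀ j ∈ Finset.univ.erase k, ‖(1 - γ • G) k j‖ = γ * G k j := by
      intro j hj
      have hjk : j ≠ k := Finset.ne_of_mem_erase hj
      simp only [Matrix.sub_apply, Matrix.one_apply, if_neg (Ne.symm hjk), Matrix.smul_apply,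
        smul_eq_mul, zero_sub, Real.norm_eq_abs, abs_neg,
        abs_of_nonneg (mul_nonneg hγ0.le (hposG k j))]
    rw [Finset.sum_congr rfl h1]
    have h2 : (1 - γ • G) k k = 1 := by
      simp [Matrix.sub_apply, Matrix.one_apply, Matrix.smul_apply, hdiag k]
    rw [h2]
    simp only [norm_one]
    rw [← Finset.mul_sum]
    have hs : 0 ≤ ∑ j ∈ Finset.univ.erase k, G k j :=
      Finset.sum_nonneg fun j _ => hposG k j
    calc γ * ∑ j ∈ Finset.univ.erase k, G k j ≤ 1 * ∑ j ∈ Finset.univ.erase k, G k j := by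
          apply mul_le_mul_of_nonneg_right hγ1.le hs
      _ < 1 := by rw [one_mul]; exact hrow k
  have hAc : (1 - γ • G) *ᵥ c = fun _ => 1 := by
    rw [hc, Matrix.mulVec_mulVec, Matrix.mul_nonsing_inv _ (isUnit_iff_ne_zero.mpr hdet),
      Matrix.one_mulVec]
  have hGc : ∀ i, γ * ∑ j, G i j * c j = c i - 1 := by
    intro i
    have h := congrFun hAc i
    simp only [Matrix.mulVec, dotProduct, Matrix.sub_apply, Matrix.smul_apply,
      Matrix.one_apply, sub_mul, ite_mul, one_mul, zero_mul, smul_eq_mul,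
      Finset.sum_sub_distrib, Finset.sum_ite_eq, Finset.mem_univ, if_true] at h
    rw [Finset.mul_sum]
    simp only [mul_assoc] at h
    linarith [h]
  -- probability part
  have hInt : ∀ k, Integrable (ε k) μ := fun k => (hL2 k).integrable one_le_two
  have gmul : ∀ f g : Ω → ℝ, MemLp f 2 μ → MemLp g 2 μ →
      Integrable (fun ω => f ω * g ω) μ := by
    intro f g hf hg
    have h : MemLp (f • g) 1 μ := hg.smul hf (hpqr := ENNReal.holderConjugate_iff.mpr ENNReal.inv_two_add_inv_two)
    have := h.integrable le_rfl
    exact this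
  have hIprod : ∀ k l, Integrable (fun ω => ε k ω * ε l ω) μ :=
    fun k l => gmul _ _ (hL2 k) (hL2 l)
  have horth : ∀ k l, k ≠ l → ∫ ω, ε k ω * ε l ω ∂μ = 0 := by
    intro k l hkl
    have h := (hindep.indepFun hkl).integral_mul_eq_mul_integral (hInt k).1 (hInt l).1
    simpa [Pi.mul_apply, hmean] using h
  have hsq : ∀ k, ∫ ω, ε k ω * ε k ω ∂μ = variance (ε k) μ := by
    intro k
    rw [variance_eq_sub (hL2 k), hmean]
    simp [pow_two]
  have hquad3 : ∀ (k l m : Option (Fin n)), k ≠ l → k ≠ m → l ≠ m → ∀ α β δ : ℝ,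
      ∫ ω, (α * ε k ω + β * ε l ω + δ * ε m ω)^2 ∂μ
        = α^2 * variance (ε k) μ + β^2 * variance (ε l) μ + δ^2 * variance (ε m) μ := by
    intro k l m hkl hkm hlm α β δ
    have hfe : (fun ω => (α * ε k ω + β * ε l ω + δ * ε m ω)^2)
        = fun ω => ((((α^2 * (ε k ω * ε k ω) + β^2 * (ε l ω * ε l ω)) + δ^2 * (ε m ω * ε m ω))
            + 2*α*β * (ε k ω * ε l ω)) + 2*α*δ * (ε k ω * ε m ω)) + 2*β*δ * (ε l ω * ε m ω) := by
      funext ω; ring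
    have i1 := (hIprod k k).const_mul (α^2)
    have i2 := (hIprod l l).const_mul (β^2)
    have i3 := (hIprod m m).const_mul (δ^2)
    have i4 := (hIprod k l).const_mul (2*α*β)
    have i5 := (hIprod k m).const_mul (2*α*δ)
    have i6 := (hIprod l m).const_mul (2*β*δ)
    have i12 : Integrable (fun x => α^2 * (ε k x * ε k x) + β^2 * (ε l x * ε l x)) μ := i1.add i2
    have i13 : Integrable (fun x => α^2 * (ε k x * ε k x) + β^2 * (ε l x * ε l x)
        + δ^2 * (ε m x * ε m x)) μ := i12.add i3
    have i14 : Integrable (fun x => α^2 * (ε k x * ε k x) + β^2 * (ε l x * ε l x)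
        + δ^2 * (ε m x * ε m x) + 2*α*β * (ε k x * ε l x)) μ := i13.add i4
    have i15 : Integrable (fun x => α^2 * (ε k x * ε k x) + β^2 * (ε l x * ε l x)
        + δ^2 * (ε m x * ε m x) + 2*α*β * (ε k x * ε l x) + 2*α*δ * (ε k x * ε m x)) μ :=
      i14.add i5
    rw [hfe, integral_add i15 i6, integral_add i14 i5, integral_add i13 i4,
      integral_add i12 i3, integral_add i1 i2,
      integral_const_mul, integral_const_mul, integral_const_mul, integral_const_mul,
      integral_const_mul, integral_const_mul,
      hsq k, hsq l, hsq m, horth k l hkl, horth k m hkm, horth l m hlm]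
    ring
  have hquad2 : ∀ (k l : Option (Fin n)), k ≠ l → ∀ α β : ℝ,
      ∫ ω, (α * ε k ω + β * ε l ω)^2 ∂μ
        = α^2 * variance (ε k) μ + β^2 * variance (ε l) μ := by
    intro k l hkl α β
    have hfe : (fun ω => (α * ε k ω + β * ε l ω)^2)
        = fun ω => ((α^2 * (ε k ω * ε k ω) + β^2 * (ε l ω * ε l ω)) + 2*α*β * (ε k ω * ε l ω)) := by
      funext ω; ring
    have i1 := (hIprod k k).const_mul (α^2)
    have i2 := (hIprod l l).const_mul (β^2)
    have i4 := (hIprod k l).const_mul (2*α*β)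
    have i12 : Integrable (fun x => α^2 * (ε k x * ε k x) + β^2 * (ε l x * ε l x)) μ := i1.add i2
    rw [hfe, integral_add i12 i4, integral_add i1 i2,
      integral_const_mul, integral_const_mul, integral_const_mul,
      hsq k, hsq l, horth k l hkl]
    ring
  -- second moments of X
  have hXfun : ∀ i, X i = fun ω => (1 - b i) * ε (some i) ω + b i * ε none ω := by
    intro i; funext ω; exact hX i ω
  have hXL2 : ∀ i, MemLp (X i) 2 μ := by
    intro i
    rw [hXfun i]
    exact ((hL2 (some i)).const_mul _).add ((hL2 none).const_mul _)
  have hV : ∀ i, ∫ ω, (X i ω)^2 ∂μ = (1 - b i)^2 * τx⁻¹ + (b i)^2 * τy⁻¹ := by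
    intro i
    have hfe : (fun ω => (X i ω)^2)
        = fun ω => ((1 - b i) * ε (some i) ω + b i * ε none ω)^2 := by
      funext ω; rw [hX i ω]
    rw [hfe, hquad2 (some i) none (by simp) (1 - b i) (b i), hvarx, hvary]
    ring
  have hW : ∀ i j : Fin n, i ≠ j → ∫ ω, (X i ω - X j ω)^2 ∂μ
      = (1 - b i)^2 * τx⁻¹ + (1 - b j)^2 * τx⁻¹ + (b i - b j)^2 * τy⁻¹ := by
    intro i j hij
    have hfe : (fun ω => (X i ω - X j ω)^2)
        = fun ω => ((1 - b i) * ε (some i) ω + (-(1 - b j)) * ε (some j) ω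
            + (b i - b j) * ε none ω)^2 := by
      funext ω; rw [hX i ω, hX j ω]; ring
    rw [hfe, hquad3 (some i) (some j) none (by simpa using hij) (by simp) (by simp)
      (1 - b i) (-(1 - b j)) (b i - b j), hvarx, hvarx, hvary]
    ring
  -- per-agent integral evaluation
  have hXsqInt : ∀ i, Integrable (fun ω => (X i ω)^2) μ := by
    intro i
    have := gmul (X i) (X i) (hXL2 i) (hXL2 i)
    simpa [pow_two] using this
  have hXdsqInt : ∀ i j, Integrable (fun ω => (X i ω - X j ω)^2) μ := by
    intro i j
    have hL : MemLp (fun ω => X i ω - X j ω) 2 μ := (hXL2 i).sub (hXL2 j)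
    have := gmul _ _ hL hL
    simpa [pow_two] using this
  have hEint : ∀ i, (∫ ω, (-(1 - ∑ j ∈ Finset.univ.erase i, G i j) * (X i ω) ^ 2
          - ∑ j ∈ Finset.univ.erase i, G i j * (X i ω - X j ω) ^ 2) ∂μ)
      = -(1 - ∑ j ∈ Finset.univ.erase i, G i j) * ((1 - b i)^2 * τx⁻¹ + (b i)^2 * τy⁻¹)
        - ∑ j ∈ Finset.univ.erase i, G i j
            * ((1 - b i)^2 * τx⁻¹ + (1 - b j)^2 * τx⁻¹ + (b i - b j)^2 * τy⁻¹) := by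
    intro i
    have h1 : Integrable (fun ω => -(1 - ∑ j ∈ Finset.univ.erase i, G i j) * (X i ω) ^ 2) μ :=
      (hXsqInt i).const_mul _
    have h2 : Integrable (fun ω => ∑ j ∈ Finset.univ.erase i, G i j * (X i ω - X j ω) ^ 2) μ :=
      integrable_finset_sum _ fun j _ => (hXdsqInt i j).const_mul _
    rw [integral_sub h1 h2, integral_const_mul, hV i,
      integral_finset_sum _ fun j _ => (hXdsqInt i j).const_mul _]
    congr 1
    refine Finset.sum_congr rfl fun j hj => ?_
    have hij : i ≠ j := (Finset.ne_of_mem_erase hj).symm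
    rw [integral_const_mul, hW i j hij]
  -- explicit formula for ΔW
  have hΔW' : ΔW = ∑ i, (-(1 - ∑ j ∈ Finset.univ.erase i, G i j)
            * ((1 - b i)^2 * τx⁻¹ + (b i)^2 * τy⁻¹)
        - ∑ j ∈ Finset.univ.erase i, G i j
            * ((1 - b i)^2 * τx⁻¹ + (1 - b j)^2 * τx⁻¹ + (b i - b j)^2 * τy⁻¹)
        + τx⁻¹ * (1 + ∑ j ∈ Finset.univ.erase i, G i j)) := by
    rw [hΔW]
    exact Finset.sum_congr rfl fun i _ => by rw [hEint i]
  -- algebra: reduce to the Katz-Bonacich expression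
  have hsO : ∀ i, ∑ j ∈ Finset.univ.erase i, G i j = ∑ j, G i j :=
    fun i => Finset.sum_erase _ (hdiag i)
  have hdin' : ∀ i, din i = ∑ j, G j i := by
    intro i; rw [hdin i]
    exact Finset.sum_erase _ (hdiag i)
  have herase : ∀ (i : Fin n) (f : Fin n → ℝ),
      ∑ j ∈ Finset.univ.erase i, G i j * f j = ∑ j, G i j * f j := by
    intro i f
    exact Finset.sum_erase _ (by rw [hdiag i]; ring)
  have hGc' : ∀ i, ∑ j, G i j * c j = (c i - 1) / γ := by
    intro i
    field_simp
    linarith [hGc i]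
  have hGb : ∀ i, ∑ j, G i j * b j = (1 - γ) * ((c i - 1) / γ) := by
    intro i
    calc ∑ j, G i j * b j = ∑ j, (1 - γ) * (G i j * c j) :=
          Finset.sum_congr rfl fun j _ => by rw [hb j]; ring
      _ = (1 - γ) * ∑ j, G i j * c j := by rw [Finset.mul_sum]
      _ = _ := by rw [hGc' i]
  have split : ∀ i, ∑ j, G i j * ((1 - b i)^2 * τx⁻¹ + (1 - b j)^2 * τx⁻¹ + (b i - b j)^2 * τy⁻¹)
      = ((1 - b i)^2 * τx⁻¹ + (b i)^2 * τy⁻¹) * (∑ j, G i j)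
        + τx⁻¹ * (∑ j, G i j * (1 - b j)^2) + τy⁻¹ * (∑ j, G i j * (b j)^2)
        - 2 * (b i) * τy⁻¹ * (∑ j, G i j * b j) := by
    intro i
    rw [Finset.mul_sum, Finset.mul_sum, Finset.mul_sum, Finset.mul_sum,
      ← Finset.sum_add_distrib, ← Finset.sum_add_distrib, ← Finset.sum_sub_distrib]
    exact Finset.sum_congr rfl fun j _ => by ring
  have step1 : ∑ i, (-(1 - ∑ j ∈ Finset.univ.erase i, G i j)
            * ((1 - b i)^2 * τx⁻¹ + (b i)^2 * τy⁻¹)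
        - ∑ j ∈ Finset.univ.erase i, G i j
            * ((1 - b i)^2 * τx⁻¹ + (1 - b j)^2 * τx⁻¹ + (b i - b j)^2 * τy⁻¹)
        + τx⁻¹ * (1 + ∑ j ∈ Finset.univ.erase i, G i j))
      = ∑ i, ((-(1 - b i)^2 * τx⁻¹ - (b i)^2 * τy⁻¹ + τx⁻¹
              + 2 * (b i) * τy⁻¹ * ((1 - γ) * ((c i - 1) / γ)))
          + (τx⁻¹ * (∑ j, G i j)
            - (τx⁻¹ * (∑ j, G i j * (1 - b j)^2) + τy⁻¹ * (∑ j, G i j * (b j)^2)))) := by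
    refine Finset.sum_congr rfl fun i _ => ?_
    rw [hsO i, herase i (fun j => (1 - b i)^2 * τx⁻¹ + (1 - b j)^2 * τx⁻¹ + (b i - b j)^2 * τy⁻¹),
      split i, hGb i]
    ring
  have hT0 : ∑ i, ∑ j, G i j = ∑ i, din i := by
    rw [show ∑ i, ∑ j, G i j = ∑ j, ∑ i, G i j from Finset.sum_comm]
    exact Finset.sum_congr rfl fun j _ => (hdin' j).symm
  have hT1 : ∑ i, ∑ j, G i j * (1 - b j)^2 = ∑ i, din i * (1 - b i)^2 := by
    rw [Finset.sum_comm]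
    refine Finset.sum_congr rfl fun j _ => ?_
    rw [← Finset.sum_mul, hdin' j]
  have hT2 : ∑ i, ∑ j, G i j * (b j)^2 = ∑ i, din i * (b i)^2 := by
    rw [Finset.sum_comm]
    refine Finset.sum_congr rfl fun j _ => ?_
    rw [← Finset.sum_mul, hdin' j]
  have hQ : ∑ i, (τx⁻¹ * (∑ j, G i j)
        - (τx⁻¹ * (∑ j, G i j * (1 - b j)^2) + τy⁻¹ * (∑ j, G i j * (b j)^2)))
      = ∑ i, (τx⁻¹ * din i - (τx⁻¹ * (din i * (1 - b i)^2) + τy⁻¹ * (din i * (b i)^2))) := by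
    calc ∑ i, (τx⁻¹ * (∑ j, G i j)
          - (τx⁻¹ * (∑ j, G i j * (1 - b j)^2) + τy⁻¹ * (∑ j, G i j * (b j)^2)))
        = τx⁻¹ * (∑ i, ∑ j, G i j) - (τx⁻¹ * (∑ i, ∑ j, G i j * (1 - b j)^2)
            + τy⁻¹ * (∑ i, ∑ j, G i j * (b j)^2)) := by
          rw [Finset.sum_sub_distrib, Finset.sum_add_distrib, ← Finset.mul_sum,
            ← Finset.mul_sum, ← Finset.mul_sum]
      _ = τx⁻¹ * (∑ i, din i) - (τx⁻¹ * (∑ i, din i * (1 - b i)^2)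
            + τy⁻¹ * (∑ i, din i * (b i)^2)) := by rw [hT0, hT1, hT2]
      _ = _ := by
          rw [Finset.sum_sub_distrib, Finset.sum_add_distrib, ← Finset.mul_sum,
            ← Finset.mul_sum, ← Finset.mul_sum]
  have key : ΔW = (τy / (τx * (τx + τy))) * ∑ i, c i * ((1 - din i) * c i + 2 * din i) := by
    rw [hΔW', step1, Finset.sum_add_distrib, hQ, ← Finset.sum_add_distrib, Finset.mul_sum]
    refine Finset.sum_congr rfl fun i _ => ?_
    rw [hb i, hγ]
    have h1 : τx + τy ≠ 0 := ne_of_gt hτ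
    field_simp
    ring
  -- conclusion
  have hK : 0 < τy / (τx * (τx + τy)) := by positivity
  rw [key]
  constructor
  · intro h
    by_contra hge
    push_neg at hge
    nlinarith [mul_nonneg hK.le hge]
  · intro h
    exact mul_neg_of_pos_of_neg hK h
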